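/- If a finite group G satisfies the CP₃ condition, then every element of G has prime power order. -/

import Mathlib

theorem stmt_13 (G : Type*) [Group G] [Fintype G]
    (h : ∀ a b : G, orderOf (a * b) < orderOf a + orderOf b) :
    ∀ g : G, IsPrimePow (orderOf g) ∨ orderOf g = 1 := by
  intro g
  by_contra hc
  push_neg at hc
  obtain ⟨hnp, hne1⟩ := hc
  set n := orderOf g with hn
  have hn0 : n ≠ 0 := (orderOf_pos g).ne'
  have hn1 : 1 < n := lt_of_le_of_ne (Nat.one_le_iff_ne_zero.mpr hn0) (Ne.symm hne1)
  set p := n.minFac with hp'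
  have hp : p.Prime := Nat.minFac_prime hne1
  have hpd : p ∣ n := Nat.minFac_dvd n
  have hk1 : 0 < n.factorization p := hp.factorization_pos_of_dvd hn0 hpd
  set r := p ^ n.factorization p with hr
  set s := n / r with hs
  have hrs : r * s = n := Nat.ordProj_mul_ordCompl_eq_self n p
  have hcop : Nat.Coprime r s := (Nat.coprime_ordCompl hp hn0).pow_left _
  have hr2 : 2 ≤ r := by
    calc 2 ≤ p := hp.two_le
    _ ≤ p ^ n.factorization p := Nat.le_self_pow hk1.ne' p
  have hs0 : s ≠ 0 := by
    intro h0; rw [h0, mul_zero] at hrs; exact hn0 hrs.symm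
  have hs2 : 2 ≤ s := by
    rcases Nat.lt_or_ge s 2 with h2 | h2
    · interval_cases s
      · exact absurd rfl hs0
      · exfalso; apply hnp
        rw [mul_one] at hrs
        exact ⟨p, n.factorization p, hp.prime, hk1, hrs⟩
    · exact h2
  -- Bezout
  have hic : IsCoprime (r : ℤ) (s : ℤ) := Nat.isCoprime_iff_coprime.mpr hcop
  obtain ⟨u, v, huv⟩ := hic
  set a := g ^ (v * s : ℤ) with ha
  set b := g ^ (u * r : ℤ) with hb
  have hgn : g ^ (n : ℤ) = 1 := by
    rw [zpow_natCast]; exact pow_orderOf_eq_one g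
  have hab : a * b = g := by
    rw [ha, hb, ← zpow_add,
      show v * (s : ℤ) + u * (r : ℤ) = 1 by linarith [huv]]
    exact zpow_one g
  have hapow : a ^ r = 1 := by
    rw [ha, ← zpow_natCast, ← zpow_mul]
    have : v * (s : ℤ) * (r : ℤ) = (n : ℤ) * v := by
      push_cast [← hrs]; ring
    rw [this, zpow_mul, hgn, one_zpow]
  have hbpow : b ^ s = 1 := by
    rw [hb, ← zpow_natCast, ← zpow_mul]
    have : u * (r : ℤ) * (s : ℤ) = (n : ℤ) * u := by
      push_cast [← hrs]; ring
    rw [this, zpow_mul, hgn, one_zpow]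
  have hale : orderOf a ≤ r :=
    Nat.le_of_dvd (by omega) (orderOf_dvd_of_pow_eq_one hapow)
  have hble : orderOf b ≤ s :=
    Nat.le_of_dvd (by omega) (orderOf_dvd_of_pow_eq_one hbpow)
  have hh := h a b
  rw [hab, ← hn] at hh
  nlinarith [hrs, hr2, hs2, hale, hble, hh]
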